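/- Variance inflation with misspecified outcome regressions: with Ψ₁ as above and Ψ₃ = D(Y-m̃₁(X))/p(X) - (1-D)(Y-m̃₀(X))/(1-p(X)) + m̃₁(X) - m̃₀(X) using the true propensity score but misspecified m̃₁, m̃₀, we have E[Ψ₃²|X] - E[Ψ₁²|X] = E[ ((1 - D/p(X))(m̃₁(X)-m₁(X)) - (1 - (1-D)/(1-p(X)))(m̃₀(X)-m₀(X)))² | X ] ≥ 0. In particular σ₃²(x₁) ≥ σ₁²(x₁) for conditional variances given X₁ = x₁. -/

import Mathlib

open MeasureTheory ProbabilityTheory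

section helpers
variable {α : Type*} {m m0 : MeasurableSpace α} {μ : Measure α}

lemma my_memLp_mul_of_ae_bound {f g : α → ℝ} (hg : MemLp g 2 μ)
    (hf : AEStronglyMeasurable f μ) {C : ℝ} (hC : ∀ᵐ ω ∂μ, |f ω| ≤ C) :
    MemLp (fun ω => f ω * g ω) 2 μ := by
  refine MemLp.of_le (hg.const_mul C) (hf.mul hg.aestronglyMeasurable) ?_
  filter_upwards [hC] with ω h
  rw [Real.norm_eq_abs, Real.norm_eq_abs, abs_mul, abs_mul]
  exact (mul_le_mul_of_nonneg_right h (abs_nonneg _)).trans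
    (mul_le_mul_of_nonneg_right (le_abs_self C) (abs_nonneg _))

lemma my_integrable_mul {f g : α → ℝ} (hf : MemLp f 2 μ) (hg : MemLp g 2 μ) :
    Integrable (fun ω => f ω * g ω) μ := by
  have h : MemLp (f • g) 1 μ := hg.smul hf
  rw [← memLp_one_iff_integrable]
  exact h

lemma my_div_abs_le_inv {x p ε : ℝ} (hx : |x| ≤ 1) (hε : 0 < ε) (hp : ε ≤ p) :
    |x / p| ≤ ε⁻¹ := by
  have hp0 : 0 < p := hε.trans_le hp
  rw [abs_div, abs_of_pos hp0, div_le_iff₀ hp0]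
  refine hx.trans ?_
  rw [← inv_mul_cancel₀ hε.ne']
  exact mul_le_mul_of_nonneg_left hp (inv_nonneg.mpr hε.le)

lemma my_memLp_two_condexp (hm : m ≤ m0) [IsFiniteMeasure μ] {f : α → ℝ}
    (hf : MemLp f 2 μ) : MemLp (μ[f|m]) 2 μ := by
  have hint : Integrable f μ := hf.integrable one_le_two
  set F : Lp ℝ 2 μ := hf.toLp f with hF
  have hFae : (F : α → ℝ) =ᵐ[μ] f := hf.coeFn_toLp
  have hG : MemLp ((condExpL2 ℝ ℝ hm F : Lp ℝ 2 μ) : α → ℝ) 2 μ := Lp.memLp _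
  refine hG.ae_eq ?_
  refine ae_eq_condExp_of_forall_setIntegral_eq hm hint ?_ ?_ ?_
  · intro s _ _
    exact (hG.integrable one_le_two).integrableOn
  · intro s hs hμs
    rw [integral_condExpL2_eq hm F hs hμs.ne]
    exact setIntegral_congr_ae (hm s hs) (hFae.mono fun ω h _ => h)
  · exact aestronglyMeasurable_condExpL2 hm F

end helpers

set_option maxHeartbeats 2000000 in
lemma aux_variance {Ω : Type*} {m m₀ : MeasurableSpace Ω} (hm : m ≤ m₀)
    (μ : Measure Ω) [IsProbabilityMeasure μ]
    (D Y m1 m0f t1 t0 pX : Ω → ℝ)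
    (hD : Measurable[m₀] D) (hD01 : ∀ ω, D ω = 0 ∨ D ω = 1)
    (hYL2 : MemLp Y 2 μ)
    (hpX : pX =ᵐ[μ] μ[D|m])
    (ε : ℝ) (hε : 0 < ε) (hpb : ∀ ω, ε ≤ pX ω ∧ pX ω ≤ 1 - ε)
    (hm1meas : StronglyMeasurable[m] m1) (hm0meas : StronglyMeasurable[m] m0f)
    (hm1 : μ[fun ω => D ω * Y ω|m] =ᵐ[μ] fun ω => pX ω * m1 ω)
    (hm0 : μ[fun ω => (1 - D ω) * Y ω|m] =ᵐ[μ] fun ω => (1 - pX ω) * m0f ω)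
    (ht1m : StronglyMeasurable[m] t1) (ht0m : StronglyMeasurable[m] t0)
    (ht1L2 : MemLp t1 2 μ) (ht0L2 : MemLp t0 2 μ) :
    ((fun ω =>
        (μ[fun ω' => (D ω' * (Y ω' - t1 ω') / pX ω'
              - (1 - D ω') * (Y ω' - t0 ω') / (1 - pX ω')
              + t1 ω' - t0 ω') ^ 2 | m]) ω
        - (μ[fun ω' => (D ω' * (Y ω' - m1 ω') / pX ω'
              - (1 - D ω') * (Y ω' - m0f ω') / (1 - pX ω')
              + m1 ω' - m0f ω') ^ 2 | m]) ω)
      =ᵐ[μ]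
      μ[fun ω' =>
          ((1 - D ω' / pX ω') * (t1 ω' - m1 ω')
            - (1 - (1 - D ω') / (1 - pX ω')) * (t0 ω' - m0f ω')) ^ 2 | m])
    ∧
    (∀ᵐ ω ∂μ, 0 ≤
        (μ[fun ω' => (D ω' * (Y ω' - t1 ω') / pX ω'
              - (1 - D ω') * (Y ω' - t0 ω') / (1 - pX ω')
              + t1 ω' - t0 ω') ^ 2 | m]) ω
        - (μ[fun ω' => (D ω' * (Y ω' - m1 ω') / pX ω'
              - (1 - D ω') * (Y ω' - m0f ω') / (1 - pX ω')
              + m1 ω' - m0f ω') ^ 2 | m]) ω) := by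
  haveI hsf : SigmaFinite (μ.trim hm) := by infer_instance
  have hDabs : ∀ ω, |D ω| ≤ 1 := fun ω => by rcases hD01 ω with h | h <;> simp [h]
  have h1Dabs : ∀ ω, |1 - D ω| ≤ 1 := fun ω => by rcases hD01 ω with h | h <;> simp [h]
  set P : Ω → ℝ := μ[D|m] with hPdef
  clear_value P
  have hPb : ∀ᵐ ω ∂μ, ε ≤ P ω ∧ P ω ≤ 1 - ε := by
    filter_upwards [hpX] with ω h
    rw [← h]; exact hpb ω
  have hPsm : StronglyMeasurable[m] P := by
    rw [hPdef]; exact stronglyMeasurable_condExp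
  have hPMm : Measurable[m] P := hPsm.measurable
  have hPM : Measurable[m₀] P := (hPsm.mono hm).measurable
  have hPam : AEStronglyMeasurable P μ := hPM.aestronglyMeasurable
  have hPint : Integrable P μ := by rw [hPdef]; exact integrable_condExp
  have hm1sm : StronglyMeasurable[m₀] m1 := hm1meas.mono hm
  have hm0sm : StronglyMeasurable[m₀] m0f := hm0meas.mono hm
  -- basic L² / integrability facts
  have hDL2 : MemLp D 2 μ := by
    refine MemLp.of_le (memLp_const (1 : ℝ)) hD.aestronglyMeasurable (ae_of_all _ fun ω => ?_)
    rw [Real.norm_eq_abs, Real.norm_eq_abs]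
    simpa using hDabs ω
  have h1DL2 : MemLp (fun ω => 1 - D ω) 2 μ := (memLp_const (1 : ℝ)).sub hDL2
  have hDint : Integrable D μ := hDL2.integrable one_le_two
  have h1Dint : Integrable (fun ω => 1 - D ω) μ := h1DL2.integrable one_le_two
  have hDYL2 : MemLp (fun ω => D ω * Y ω) 2 μ :=
    my_memLp_mul_of_ae_bound hYL2 hD.aestronglyMeasurable (ae_of_all _ hDabs)
  have h1DYL2 : MemLp (fun ω => (1 - D ω) * Y ω) 2 μ :=
    my_memLp_mul_of_ae_bound hYL2 (measurable_const.sub hD).aestronglyMeasurable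
      (ae_of_all _ h1Dabs)
  have hDYint : Integrable (fun ω => D ω * Y ω) μ := hDYL2.integrable one_le_two
  have h1DYint : Integrable (fun ω => (1 - D ω) * Y ω) μ := h1DYL2.integrable one_le_two
  -- m1, m0f are L²
  have hm1L2 : MemLp m1 2 μ := by
    have hpm1 : MemLp (fun ω => pX ω * m1 ω) 2 μ :=
      (my_memLp_two_condexp hm hDYL2).ae_eq hm1
    refine MemLp.of_le (hpm1.const_mul ε⁻¹) hm1sm.aestronglyMeasurable
      (ae_of_all _ fun ω => ?_)
    rw [Real.norm_eq_abs, Real.norm_eq_abs, abs_mul, abs_mul]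
    have h1 := (hpb ω).1
    have hp0 : 0 < pX ω := hε.trans_le h1
    rw [abs_of_pos hp0, abs_of_pos (inv_pos.mpr hε)]
    have h2 : (1 : ℝ) ≤ ε⁻¹ * pX ω := by
      rw [← inv_mul_cancel₀ hε.ne']
      exact mul_le_mul_of_nonneg_left h1 (inv_nonneg.mpr hε.le)
    nlinarith [abs_nonneg (m1 ω)]
  have hm0L2 : MemLp m0f 2 μ := by
    have hpm0 : MemLp (fun ω => (1 - pX ω) * m0f ω) 2 μ :=
      (my_memLp_two_condexp hm h1DYL2).ae_eq hm0
    refine MemLp.of_le (hpm0.const_mul ε⁻¹) hm0sm.aestronglyMeasurable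
      (ae_of_all _ fun ω => ?_)
    rw [Real.norm_eq_abs, Real.norm_eq_abs, abs_mul, abs_mul]
    have h1 : ε ≤ 1 - pX ω := by have := (hpb ω).2; linarith
    have hp0 : 0 < 1 - pX ω := hε.trans_le h1
    rw [abs_of_pos hp0, abs_of_pos (inv_pos.mpr hε)]
    have h2 : (1 : ℝ) ≤ ε⁻¹ * (1 - pX ω) := by
      have hie : ε⁻¹ * ε = 1 := inv_mul_cancel₀ hε.ne'
      nlinarith [inv_nonneg.mpr hε.le]
    nlinarith [abs_nonneg (m0f ω)]
  -- the clean score functions (with the m-measurable version P of pX)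
  set Ψ : Ω → ℝ := fun ω => D ω * (Y ω - m1 ω) / P ω
      - (1 - D ω) * (Y ω - m0f ω) / (1 - P ω) + m1 ω - m0f ω with hΨdef
  set Δ : Ω → ℝ := fun ω => (1 - D ω / P ω) * (t1 ω - m1 ω)
      - (1 - (1 - D ω) / (1 - P ω)) * (t0 ω - m0f ω) with hΔdef
  clear_value Ψ Δ
  -- a.e. bounds for the coefficient functions
  have hb1 : ∀ᵐ ω ∂μ, |D ω / P ω| ≤ ε⁻¹ := by
    filter_upwards [hPb] with ω h
    exact my_div_abs_le_inv (hDabs ω) hε h.1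
  have hb0 : ∀ᵐ ω ∂μ, |(1 - D ω) / (1 - P ω)| ≤ ε⁻¹ := by
    filter_upwards [hPb] with ω h
    exact my_div_abs_le_inv (h1Dabs ω) hε (by linarith [h.2])
  have hq1m : AEStronglyMeasurable (fun ω => D ω / P ω) μ :=
    (hD.div hPM).aestronglyMeasurable
  have hq0m : AEStronglyMeasurable (fun ω => (1 - D ω) / (1 - P ω)) μ :=
    ((measurable_const.sub hD).div (measurable_const.sub hPM)).aestronglyMeasurable
  -- L² membership of Ψ and Δ
  have hΨL2 : MemLp Ψ 2 μ := by
    have hq1L2 : MemLp (fun ω => D ω / P ω * (Y ω - m1 ω)) 2 μ :=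
      my_memLp_mul_of_ae_bound (hYL2.sub hm1L2) hq1m hb1
    have hq0L2 : MemLp (fun ω => (1 - D ω) / (1 - P ω) * (Y ω - m0f ω)) 2 μ :=
      my_memLp_mul_of_ae_bound (hYL2.sub hm0L2) hq0m hb0
    refine ((hq1L2.sub hq0L2).add (hm1L2.sub hm0L2)).ae_eq (ae_of_all _ fun ω => ?_)
    simp only [hΨdef, Pi.add_apply, Pi.sub_apply]
    ring
  have hΔL2 : MemLp Δ 2 μ := by
    have hd1 : MemLp (fun ω => (1 - D ω / P ω) * (t1 ω - m1 ω)) 2 μ := by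
      refine my_memLp_mul_of_ae_bound (C := 1 + ε⁻¹) (ht1L2.sub hm1L2)
        (aestronglyMeasurable_const.sub hq1m) ?_
      filter_upwards [hb1] with ω h
      calc |1 - D ω / P ω| ≤ |(1:ℝ)| + |D ω / P ω| := abs_sub _ _
        _ ≤ 1 + ε⁻¹ := by rw [abs_one]; linarith
    have hd0 : MemLp (fun ω => (1 - (1 - D ω) / (1 - P ω)) * (t0 ω - m0f ω)) 2 μ := by
      refine my_memLp_mul_of_ae_bound (C := 1 + ε⁻¹) (ht0L2.sub hm0L2)
        (aestronglyMeasurable_const.sub hq0m) ?_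
      filter_upwards [hb0] with ω h
      calc |1 - (1 - D ω) / (1 - P ω)| ≤ |(1:ℝ)| + |(1 - D ω) / (1 - P ω)| := abs_sub _ _
        _ ≤ 1 + ε⁻¹ := by rw [abs_one]; linarith
    refine (hd1.sub hd0).ae_eq (ae_of_all _ fun ω => ?_)
    simp only [hΔdef, Pi.sub_apply]
  have hΨsq : Integrable (fun ω => Ψ ω ^ 2) μ := hΨL2.integrable_sq
  have hΔsq : Integrable (fun ω => Δ ω ^ 2) μ := hΔL2.integrable_sq
  have hΨΔ : Integrable (fun ω => Ψ ω * Δ ω) μ := my_integrable_mul hΨL2 hΔL2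
  have hΨ3sq : Integrable (fun ω => (Ψ ω + Δ ω) ^ 2) μ := (hΨL2.add hΔL2).integrable_sq
  -- the three centered factors have vanishing conditional expectation
  have hm1Dint : Integrable (fun ω => m1 ω * D ω) μ := my_integrable_mul hm1L2 hDL2
  have hm0Dint : Integrable (fun ω => m0f ω * (1 - D ω)) μ := my_integrable_mul hm0L2 h1DL2
  have hW1 : μ[fun ω => D ω * (Y ω - m1 ω)|m] =ᵐ[μ] 0 := by
    have hadd1 : (fun ω => D ω * (Y ω - m1 ω))
        =ᵐ[μ] (fun ω => D ω * Y ω) - fun ω => m1 ω * D ω :=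
      ae_of_all _ fun ω => by simp only [Pi.sub_apply]; ring
    have h2 := (condExp_congr_ae (m := m) hadd1).trans (condExp_sub hDYint hm1Dint _)
    have h3 : μ[fun ω => m1 ω * D ω|m] =ᵐ[μ] m1 * P := by
      rw [hPdef]
      exact condExp_mul_of_stronglyMeasurable_left hm1meas hm1Dint hDint
    filter_upwards [h2, h3, hm1, hpX] with ω e2 e3 e1 epx
    simp only [Pi.sub_apply, Pi.mul_apply, Pi.zero_apply] at e2 e3 ⊢
    rw [e2, e1, e3, epx]
    ring
  have hW0 : μ[fun ω => (1 - D ω) * (Y ω - m0f ω)|m] =ᵐ[μ] 0 := by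
    have hadd0 : (fun ω => (1 - D ω) * (Y ω - m0f ω))
        =ᵐ[μ] (fun ω => (1 - D ω) * Y ω) - fun ω => m0f ω * (1 - D ω) :=
      ae_of_all _ fun ω => by simp only [Pi.sub_apply]; ring
    have h2 := (condExp_congr_ae (m := m) hadd0).trans (condExp_sub h1DYint hm0Dint _)
    have h3 : μ[fun ω => m0f ω * (1 - D ω)|m] =ᵐ[μ] m0f * μ[fun ω => 1 - D ω|m] :=
      condExp_mul_of_stronglyMeasurable_left hm0meas hm0Dint h1Dint
    have h4 : μ[fun ω => 1 - D ω|m] =ᵐ[μ] fun ω => 1 - P ω := by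
      have h5 : (fun ω => (1:ℝ) - D ω) =ᵐ[μ] (fun _ => (1:ℝ)) - D :=
        ae_of_all _ fun ω => by simp only [Pi.sub_apply]
      have h6 := (condExp_congr_ae (m := m) h5).trans
        (condExp_sub (integrable_const (1:ℝ)) hDint _)
      filter_upwards [h6] with ω e6
      rw [e6]
      simp only [Pi.sub_apply, condExp_const hm, hPdef]
    filter_upwards [h2, h3, h4, hm0, hpX] with ω e2 e3 e4 e1 epx
    simp only [Pi.sub_apply, Pi.mul_apply, Pi.zero_apply] at e2 e3 ⊢
    rw [e2, e1, e3, e4, epx]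
    ring
  have hDP : μ[fun ω => D ω - P ω|m] =ᵐ[μ] 0 := by
    have hadd : (fun ω => D ω - P ω) =ᵐ[μ] D - P := ae_of_all _ fun ω => rfl
    have h2 := (condExp_congr_ae (m := m) hadd).trans (condExp_sub hDint hPint _)
    have h3 : μ[P|m] =ᵐ[μ] P := by
      rw [hPdef]
      exact condExp_condExp_of_le le_rfl hm
    filter_upwards [h2, h3] with ω e2 e3
    simp only [Pi.sub_apply, Pi.zero_apply] at e2 ⊢
    rw [e2, e3, hPdef]
    ring
  -- the correction term building blocks
  set c : Ω → ℝ := fun ω => -((P ω)⁻¹ * (t1 ω - m1 ω) + (1 - P ω)⁻¹ * (t0 ω - m0f ω))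
    with hcdef
  set g1 : Ω → ℝ := fun ω => ((1 - P ω) * (P ω)⁻¹) * c ω with hg1def
  set g0 : Ω → ℝ := fun ω => (P ω * (1 - P ω)⁻¹) * c ω with hg0def
  set g2 : Ω → ℝ := fun ω => (m1 ω - m0f ω) * c ω with hg2def
  clear_value c g1 g0 g2
  have hcMm : Measurable[m] c := by
    rw [hcdef]
    exact ((hPMm.inv.mul (ht1m.measurable.sub hm1meas.measurable)).add
      (((measurable_const.sub hPMm).inv).mul (ht0m.measurable.sub hm0meas.measurable))).neg
  have hg1sm : StronglyMeasurable[m] g1 := by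
    rw [hg1def]
    exact ((((measurable_const.sub hPMm).mul hPMm.inv).mul hcMm)).stronglyMeasurable
  have hg0sm : StronglyMeasurable[m] g0 := by
    rw [hg0def]
    exact (((hPMm.mul (measurable_const.sub hPMm).inv)).mul hcMm).stronglyMeasurable
  have hg2sm : StronglyMeasurable[m] g2 := by
    rw [hg2def]
    exact (((hm1meas.measurable.sub hm0meas.measurable)).mul hcMm).stronglyMeasurable
  have hPinvm : AEStronglyMeasurable (fun ω => (P ω)⁻¹) μ := hPM.inv.aestronglyMeasurable
  have h1Pinvm : AEStronglyMeasurable (fun ω => (1 - P ω)⁻¹) μ :=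
    (measurable_const.sub hPM).inv.aestronglyMeasurable
  have hbPinv : ∀ᵐ ω ∂μ, |(P ω)⁻¹| ≤ ε⁻¹ := by
    filter_upwards [hPb] with ω h
    have h2 := my_div_abs_le_inv (x := 1) (by norm_num) hε h.1
    rwa [one_div] at h2
  have hb1Pinv : ∀ᵐ ω ∂μ, |(1 - P ω)⁻¹| ≤ ε⁻¹ := by
    filter_upwards [hPb] with ω h
    have h2 := my_div_abs_le_inv (x := 1) (by norm_num) hε (by linarith [h.2] : ε ≤ 1 - P ω)
    rwa [one_div] at h2
  have hcL2 : MemLp c 2 μ := by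
    have ha : MemLp (fun ω => (P ω)⁻¹ * (t1 ω - m1 ω)) 2 μ :=
      my_memLp_mul_of_ae_bound (ht1L2.sub hm1L2) hPinvm hbPinv
    have hb : MemLp (fun ω => (1 - P ω)⁻¹ * (t0 ω - m0f ω)) 2 μ :=
      my_memLp_mul_of_ae_bound (ht0L2.sub hm0L2) h1Pinvm hb1Pinv
    refine ((ha.add hb).neg).ae_eq (ae_of_all _ fun ω => ?_)
    simp only [hcdef, Pi.neg_apply, Pi.add_apply]
  have hg1L2 : MemLp g1 2 μ := by
    rw [hg1def]
    refine my_memLp_mul_of_ae_bound (C := ε⁻¹) hcL2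
      (((measurable_const.sub hPM).mul hPM.inv).aestronglyMeasurable) ?_
    filter_upwards [hPb] with ω h
    have h2 : |(1 - P ω) / P ω| ≤ ε⁻¹ :=
      my_div_abs_le_inv (abs_le.mpr ⟨by linarith, by linarith⟩) hε h.1
    rwa [div_eq_mul_inv] at h2
  have hg0L2 : MemLp g0 2 μ := by
    rw [hg0def]
    refine my_memLp_mul_of_ae_bound (C := ε⁻¹) hcL2
      ((hPM.mul (measurable_const.sub hPM).inv).aestronglyMeasurable) ?_
    filter_upwards [hPb] with ω h
    have h2 : |P ω / (1 - P ω)| ≤ ε⁻¹ :=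
      my_div_abs_le_inv (abs_le.mpr ⟨by linarith, by linarith⟩) hε
        (by linarith [h.2] : ε ≤ 1 - P ω)
    rwa [div_eq_mul_inv] at h2
  have hg2int : Integrable g2 μ := by
    rw [hg2def]
    exact my_integrable_mul (hm1L2.sub hm0L2) hcL2
  have hW1L2 : MemLp (fun ω => D ω * (Y ω - m1 ω)) 2 μ :=
    my_memLp_mul_of_ae_bound (hYL2.sub hm1L2) hD.aestronglyMeasurable (ae_of_all _ hDabs)
  have hW0L2 : MemLp (fun ω => (1 - D ω) * (Y ω - m0f ω)) 2 μ :=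
    my_memLp_mul_of_ae_bound (hYL2.sub hm0L2)
      (measurable_const.sub hD).aestronglyMeasurable (ae_of_all _ h1Dabs)
  have hW1int : Integrable (fun ω => D ω * (Y ω - m1 ω)) μ := hW1L2.integrable one_le_two
  have hW0int : Integrable (fun ω => (1 - D ω) * (Y ω - m0f ω)) μ := hW0L2.integrable one_le_two
  have hDPint : Integrable (fun ω => D ω - P ω) μ := hDint.sub hPint
  have hS1int : Integrable (fun ω => g1 ω * (D ω * (Y ω - m1 ω))) μ :=
    my_integrable_mul hg1L2 hW1L2
  have hS0int : Integrable (fun ω => g0 ω * ((1 - D ω) * (Y ω - m0f ω))) μ :=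
    my_integrable_mul hg0L2 hW0L2
  have hS2int : Integrable (fun ω => g2 ω * (D ω - P ω)) μ := by
    have hbd : ∀ᵐ ω ∂μ, ‖D ω - P ω‖ ≤ 2 := by
      filter_upwards [hPb] with ω h
      rw [Real.norm_eq_abs]
      have := hDabs ω
      rw [abs_le] at this ⊢
      constructor <;> [linarith [h.2]; linarith [h.1]]
    have h := Integrable.bdd_mul (f := fun ω => D ω - P ω) (g := g2) (c := 2)
      hg2int ((hD.sub hPM).aestronglyMeasurable) hbd
    exact h.congr (ae_of_all _ fun ω => mul_comm _ _)
  -- pull-out property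
  have pe1 : μ[fun ω => g1 ω * (D ω * (Y ω - m1 ω))|m]
      =ᵐ[μ] fun ω => g1 ω * (μ[fun ω' => D ω' * (Y ω' - m1 ω')|m]) ω :=
    condExp_mul_of_stronglyMeasurable_left hg1sm hS1int hW1int
  have pe0 : μ[fun ω => g0 ω * ((1 - D ω) * (Y ω - m0f ω))|m]
      =ᵐ[μ] fun ω => g0 ω * (μ[fun ω' => (1 - D ω') * (Y ω' - m0f ω')|m]) ω :=
    condExp_mul_of_stronglyMeasurable_left hg0sm hS0int hW0int
  have pe2 : μ[fun ω => g2 ω * (D ω - P ω)|m]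
      =ᵐ[μ] fun ω => g2 ω * (μ[fun ω' => D ω' - P ω'|m]) ω :=
    condExp_mul_of_stronglyMeasurable_left hg2sm hS2int hDPint
  -- the cross term vanishes
  have hcross : μ[fun ω => Ψ ω * Δ ω|m] =ᵐ[μ] 0 := by
    have hid : (fun ω => Ψ ω * Δ ω) =ᵐ[μ] fun ω =>
        g1 ω * (D ω * (Y ω - m1 ω)) + g0 ω * ((1 - D ω) * (Y ω - m0f ω))
          + g2 ω * (D ω - P ω) := by
      filter_upwards [hPb] with ω h
      have hp0 : P ω ≠ 0 := (hε.trans_le h.1).ne'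
      have hp1 : (1:ℝ) - P ω ≠ 0 := by
        have h2 : ε ≤ 1 - P ω := by linarith [h.2]
        exact (hε.trans_le h2).ne'
      simp only [hΨdef, hΔdef, hg1def, hg0def, hg2def, hcdef]
      rcases hD01 ω with hd | hd <;> rw [hd] <;> field_simp <;> ring
    have hA : μ[fun ω => g1 ω * (D ω * (Y ω - m1 ω))
          + g0 ω * ((1 - D ω) * (Y ω - m0f ω)) + g2 ω * (D ω - P ω)|m]
        =ᵐ[μ] fun ω => (μ[fun ω' => g1 ω' * (D ω' * (Y ω' - m1 ω'))
          + g0 ω' * ((1 - D ω') * (Y ω' - m0f ω'))|m]) ω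
          + (μ[fun ω' => g2 ω' * (D ω' - P ω')|m]) ω :=
      condExp_add (hS1int.add hS0int) hS2int _
    have hB : μ[fun ω' => g1 ω' * (D ω' * (Y ω' - m1 ω'))
          + g0 ω' * ((1 - D ω') * (Y ω' - m0f ω'))|m]
        =ᵐ[μ] fun ω => (μ[fun ω' => g1 ω' * (D ω' * (Y ω' - m1 ω'))|m]) ω
          + (μ[fun ω' => g0 ω' * ((1 - D ω') * (Y ω' - m0f ω'))|m]) ω :=
      condExp_add hS1int hS0int _
    filter_upwards [condExp_congr_ae (m := m) hid, hA, hB, pe1, pe0, pe2, hW1, hW0, hDP]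
      with ω e0 eA eB p1 p0 p2 z1 z0 z2
    simp only [Pi.zero_apply] at z1 z0 z2 ⊢
    rw [e0, eA, eB, p1, p0, p2, z1, z0, z2]
    ring
  -- the key expansion
  have hkey : ∀ᵐ ω ∂μ, (μ[fun ω' => (Ψ ω' + Δ ω') ^ 2|m]) ω
      = (μ[fun ω' => Ψ ω' ^ 2|m]) ω + (μ[fun ω' => Δ ω' ^ 2|m]) ω := by
    have h1 : (fun ω => (Ψ ω + Δ ω) ^ 2)
        =ᵐ[μ] fun ω => (Ψ ω ^ 2 + Δ ω ^ 2) + (2:ℝ) * (Ψ ω * Δ ω) :=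
      ae_of_all _ fun ω => by ring
    have h2 : μ[fun ω => (Ψ ω ^ 2 + Δ ω ^ 2) + (2:ℝ) * (Ψ ω * Δ ω)|m]
        =ᵐ[μ] fun ω => (μ[fun ω' => Ψ ω' ^ 2 + Δ ω' ^ 2|m]) ω
          + (μ[fun ω' => (2:ℝ) * (Ψ ω' * Δ ω')|m]) ω :=
      condExp_add (hΨsq.add hΔsq) (hΨΔ.const_mul 2) _
    have h3 : μ[fun ω => Ψ ω ^ 2 + Δ ω ^ 2|m]
        =ᵐ[μ] fun ω => (μ[fun ω' => Ψ ω' ^ 2|m]) ω + (μ[fun ω' => Δ ω' ^ 2|m]) ω :=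
      condExp_add hΨsq hΔsq _
    have h4 : μ[fun ω => (2:ℝ) * (Ψ ω * Δ ω)|m]
        =ᵐ[μ] fun ω => (2:ℝ) * (μ[fun ω' => Ψ ω' * Δ ω'|m]) ω :=
      condExp_smul (μ := μ) (m := m) (2:ℝ) (fun ω => Ψ ω * Δ ω)
    filter_upwards [condExp_congr_ae (m := m) h1, h2, h3, h4, hcross]
      with ω e1 e2 e3 e4 e5
    simp only [Pi.zero_apply] at e5
    rw [e1, e2, e3, e4, e5]
    ring
  -- bridge between pX and P versions
  have hq3 : (fun ω' => (D ω' * (Y ω' - t1 ω') / pX ω'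
        - (1 - D ω') * (Y ω' - t0 ω') / (1 - pX ω') + t1 ω' - t0 ω') ^ 2)
      =ᵐ[μ] fun ω' => (Ψ ω' + Δ ω') ^ 2 := by
    filter_upwards [hpX] with ω h
    simp only [hΨdef, hΔdef]
    rw [h]
    ring
  have hq1 : (fun ω' => (D ω' * (Y ω' - m1 ω') / pX ω'
        - (1 - D ω') * (Y ω' - m0f ω') / (1 - pX ω') + m1 ω' - m0f ω') ^ 2)
      =ᵐ[μ] fun ω' => Ψ ω' ^ 2 := by
    filter_upwards [hpX] with ω h
    simp only [hΨdef]
    rw [h]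
  have hq2 : (fun ω' => ((1 - D ω' / pX ω') * (t1 ω' - m1 ω')
        - (1 - (1 - D ω') / (1 - pX ω')) * (t0 ω' - m0f ω')) ^ 2)
      =ᵐ[μ] fun ω' => Δ ω' ^ 2 := by
    filter_upwards [hpX] with ω h
    simp only [hΔdef]
    rw [h]
  have hb3 := condExp_congr_ae (m := m) hq3
  have hb1 := condExp_congr_ae (m := m) hq1
  have hb2 := condExp_congr_ae (m := m) hq2
  have hnn : (0 : Ω → ℝ) ≤ᵐ[μ] μ[fun ω' => Δ ω' ^ 2|m] :=
    condExp_nonneg (ae_of_all _ fun ω => sq_nonneg _)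
  constructor
  · filter_upwards [hb3, hb1, hb2, hkey] with ω e3 e1 e2 ek
    rw [e3, e1, e2, ek]
    ring
  · filter_upwards [hb3, hb1, hkey, hnn] with ω e3 e1 ek hn
    simp only [Pi.zero_apply] at hn
    rw [e3, e1, ek]
    linarith


/-- **Variance inflation with misspecified outcome regressions.**
With `Ψ₁` the correct doubly robust score and
`Ψ₃ = D(Y-m̃₁(X))/p(X) - (1-D)(Y-m̃₀(X))/(1-p(X)) + m̃₁(X) - m̃₀(X)`
using the true propensity score but misspecified `m̃₁, m̃₀`, one has
`E[Ψ₃²|X] - E[Ψ₁²|X]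
  = E[ ((1 - D/p(X))(m̃₁(X)-m₁(X)) - (1 - (1-D)/(1-p(X)))(m̃₀(X)-m₀(X)))² | X ] ≥ 0`. -/
theorem variance_inflation_misspecified_or
    {Ω E : Type*} [MeasurableSpace Ω] [StandardBorelSpace Ω] [Nonempty Ω]
    [mE : MeasurableSpace E]
    (μ : Measure Ω) [IsProbabilityMeasure μ]
    (X : Ω → E) (hX : Measurable X)
    (D Y1 Y0 Y : Ω → ℝ)
    (hD : Measurable D) (hD01 : ∀ ω, D ω = 0 ∨ D ω = 1)
    (hY1m : Measurable Y1) (hY0m : Measurable Y0)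
    (hY1 : MemLp Y1 2 μ) (hY0 : MemLp Y0 2 μ)
    (hY : ∀ ω, Y ω = D ω * Y1 ω + (1 - D ω) * Y0 ω)
    (hUnconf : CondIndepFun (MeasurableSpace.comap X mE) hX.comap_le
      (fun ω => (Y1 ω, Y0 ω)) D μ)
    (pX : Ω → ℝ)
    (hpX : pX =ᵐ[μ] μ[D | MeasurableSpace.comap X mE])
    (ε : ℝ) (hε : 0 < ε) (hpb : ∀ ω, ε ≤ pX ω ∧ pX ω ≤ 1 - ε)
    -- true outcome regressions m₁(X) = E[Y|X,D=1], m₀(X) = E[Y|X,D=0]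
    (m1 m0 : Ω → ℝ)
    (hm1meas : StronglyMeasurable[MeasurableSpace.comap X mE] m1)
    (hm0meas : StronglyMeasurable[MeasurableSpace.comap X mE] m0)
    (hm1 : μ[fun ω => D ω * Y ω | MeasurableSpace.comap X mE]
      =ᵐ[μ] fun ω => pX ω * m1 ω)
    (hm0 : μ[fun ω => (1 - D ω) * Y ω | MeasurableSpace.comap X mE]
      =ᵐ[μ] fun ω => (1 - pX ω) * m0 ω)
    -- misspecified outcome regressions, square-integrable functions of X
    (mtilde1 mtilde0 : E → ℝ)
    (hmt1 : Measurable mtilde1) (hmt0 : Measurable mtilde0)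
    (hmt1sq : MemLp (fun ω => mtilde1 (X ω)) 2 μ)
    (hmt0sq : MemLp (fun ω => mtilde0 (X ω)) 2 μ) :
    ((fun ω =>
        (μ[fun ω' => (D ω' * (Y ω' - mtilde1 (X ω')) / pX ω'
              - (1 - D ω') * (Y ω' - mtilde0 (X ω')) / (1 - pX ω')
              + mtilde1 (X ω') - mtilde0 (X ω')) ^ 2 | MeasurableSpace.comap X mE]) ω
        - (μ[fun ω' => (D ω' * (Y ω' - m1 ω') / pX ω'
              - (1 - D ω') * (Y ω' - m0 ω') / (1 - pX ω')
              + m1 ω' - m0 ω') ^ 2 | MeasurableSpace.comap X mE]) ω)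
      =ᵐ[μ]
      μ[fun ω' =>
          ((1 - D ω' / pX ω') * (mtilde1 (X ω') - m1 ω')
            - (1 - (1 - D ω') / (1 - pX ω')) * (mtilde0 (X ω') - m0 ω')) ^ 2
        | MeasurableSpace.comap X mE])
    ∧
    (∀ᵐ ω ∂μ, 0 ≤
        (μ[fun ω' => (D ω' * (Y ω' - mtilde1 (X ω')) / pX ω'
              - (1 - D ω') * (Y ω' - mtilde0 (X ω')) / (1 - pX ω')
              + mtilde1 (X ω') - mtilde0 (X ω')) ^ 2 | MeasurableSpace.comap X mE]) ω
        - (μ[fun ω' => (D ω' * (Y ω' - m1 ω') / pX ω'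
              - (1 - D ω') * (Y ω' - m0 ω') / (1 - pX ω')
              + m1 ω' - m0 ω') ^ 2 | MeasurableSpace.comap X mE]) ω) := by
  have hXc : Measurable[MeasurableSpace.comap X mE] X := fun s hs => ⟨s, hs, rfl⟩
  have hDabs : ∀ ω, |D ω| ≤ 1 := fun ω => by rcases hD01 ω with h | h <;> simp [h]
  have h1Dabs : ∀ ω, |1 - D ω| ≤ 1 := fun ω => by rcases hD01 ω with h | h <;> simp [h]
  have hYL2 : MemLp Y 2 μ := by
    have h1 : MemLp (fun ω => D ω * Y1 ω) 2 μ :=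
      my_memLp_mul_of_ae_bound hY1 hD.aestronglyMeasurable (ae_of_all _ hDabs)
    have h0 : MemLp (fun ω => (1 - D ω) * Y0 ω) 2 μ :=
      my_memLp_mul_of_ae_bound hY0 (measurable_const.sub hD).aestronglyMeasurable
        (ae_of_all _ h1Dabs)
    exact (h1.add h0).ae_eq (ae_of_all _ fun ω => (hY ω).symm)
  have ht1m : StronglyMeasurable[MeasurableSpace.comap X mE] (fun ω => mtilde1 (X ω)) :=
    (hmt1.comp hXc).stronglyMeasurable
  have ht0m : StronglyMeasurable[MeasurableSpace.comap X mE] (fun ω => mtilde0 (X ω)) :=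
    (hmt0.comp hXc).stronglyMeasurable
  exact aux_variance hX.comap_le μ D Y m1 m0 (fun ω => mtilde1 (X ω))
    (fun ω => mtilde0 (X ω)) pX hD hD01 hYL2 hpX ε hε hpb hm1meas hm0meas hm1 hm0
    ht1m ht0m hmt1sq hmt0sq
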